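/- arXiv:1503.05029 — 4 statements merged into one kernel-verified Lean document; each statement's English description precedes it below -/
import Mathlib

section
/- In the perfect-model Kalman filter recursion, for every n ≥ 1 the matrix Δ_n − M_n Δ_0 M_nᵀ is positive semidefinite, i.e. Δ_n ⪰ M_n Δ_0 M_nᵀ. -/
open Matrix Filter

/-- The operator (spectral) norm of a real matrix: the norm of the induced linear map
between Euclidean spaces. -/
noncomputable def opNorm {d e : ℕ} (Z : Matrix (Fin e) (Fin d) ℝ) : ℝ :=
  ‖LinearMap.toContinuousLinearMap (Matrix.toEuclideanLin Z)‖

/-- Analysis error covariance `Δ_n` of the perfect-model Kalman filter recursion: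
`Δ_0` is the initial covariance and, for `n ≥ 1`,
`Σ_n = A_n Δ_{n−1} A_nᵀ`, `K_n = Σ_n H_nᵀ (H_n Σ_n H_nᵀ + Q_n)⁻¹`,
`Δ_n = (I − K_n H_n) Σ_n`. -/
noncomputable def KFDelta {d q : ℕ} (A : ℕ → Matrix (Fin d) (Fin d) ℝ)
    (H : ℕ → Matrix (Fin q) (Fin d) ℝ) (Q : ℕ → Matrix (Fin q) (Fin q) ℝ)
    (Δ0 : Matrix (Fin d) (Fin d) ℝ) : ℕ → Matrix (Fin d) (Fin d) ℝ
  | 0 => Δ0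
  | n + 1 =>
      let S := A (n + 1) * KFDelta A H Q Δ0 n * (A (n + 1))ᵀ
      let K := S * (H (n + 1))ᵀ * (H (n + 1) * S * (H (n + 1))ᵀ + Q (n + 1))⁻¹
      (1 - K * H (n + 1)) * S

/-- Forecast error covariance: `KFSigma A H Q Δ0 n = Σ_{n+1} = A_{n+1} Δ_n A_{n+1}ᵀ`. -/
noncomputable def KFSigma {d q : ℕ} (A : ℕ → Matrix (Fin d) (Fin d) ℝ)
    (H : ℕ → Matrix (Fin q) (Fin d) ℝ) (Q : ℕ → Matrix (Fin q) (Fin q) ℝ)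
    (Δ0 : Matrix (Fin d) (Fin d) ℝ) (n : ℕ) : Matrix (Fin d) (Fin d) ℝ :=
  A (n + 1) * KFDelta A H Q Δ0 n * (A (n + 1))ᵀ

/-- Kalman gain: `KFGain A H Q Δ0 n = K_{n+1} = Σ_{n+1} H_{n+1}ᵀ (H_{n+1} Σ_{n+1} H_{n+1}ᵀ + Q_{n+1})⁻¹`. -/
noncomputable def KFGain {d q : ℕ} (A : ℕ → Matrix (Fin d) (Fin d) ℝ)
    (H : ℕ → Matrix (Fin q) (Fin d) ℝ) (Q : ℕ → Matrix (Fin q) (Fin q) ℝ)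
    (Δ0 : Matrix (Fin d) (Fin d) ℝ) (n : ℕ) : Matrix (Fin d) (Fin q) ℝ :=
  KFSigma A H Q Δ0 n * (H (n + 1))ᵀ *
    (H (n + 1) * KFSigma A H Q Δ0 n * (H (n + 1))ᵀ + Q (n + 1))⁻¹

/-- `KFM A H Q Δ0 n = M_n = (I − K_n H_n) A_n ⋯ (I − K_1 H_1) A_1` (with `M_0 = I`). -/
noncomputable def KFM {d q : ℕ} (A : ℕ → Matrix (Fin d) (Fin d) ℝ)
    (H : ℕ → Matrix (Fin q) (Fin d) ℝ) (Q : ℕ → Matrix (Fin q) (Fin q) ℝ)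
    (Δ0 : Matrix (Fin d) (Fin d) ℝ) : ℕ → Matrix (Fin d) (Fin d) ℝ
  | 0 => 1
  | n + 1 => (1 - KFGain A H Q Δ0 n * H (n + 1)) * A (n + 1) * KFM A H Q Δ0 n

/-- `KFB A n = B_{0:n} = A_n ⋯ A_1` (with `B_{0:0} = I`). -/
noncomputable def KFB {d : ℕ} (A : ℕ → Matrix (Fin d) (Fin d) ℝ) :
    ℕ → Matrix (Fin d) (Fin d) ℝ
  | 0 => 1
  | n + 1 => A (n + 1) * KFB A n

/-- Propagator `KFBp A n m = B_{n:n+m} = A_{n+m} ⋯ A_{n+1}` (with `B_{n:n} = I`). -/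
noncomputable def KFBp {d : ℕ} (A : ℕ → Matrix (Fin d) (Fin d) ℝ) (n : ℕ) :
    ℕ → Matrix (Fin d) (Fin d) ℝ
  | 0 => 1
  | m + 1 => A (n + m + 1) * KFBp A n m

/-- Uniform complete observability: there is `δ > 0` with
`det(Σ_{m=0}^{d−1} B_{n:n+m}ᵀ H_{n+m}ᵀ Q_{n+m}⁻¹ H_{n+m} B_{n:n+m}) ≥ δ` for all `n ≥ 1`. -/
def UCO {d q : ℕ} (A : ℕ → Matrix (Fin d) (Fin d) ℝ)
    (H : ℕ → Matrix (Fin q) (Fin d) ℝ) (Q : ℕ → Matrix (Fin q) (Fin q) ℝ) : Prop :=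
  ∃ δ > (0 : ℝ), ∀ n, 1 ≤ n →
    δ ≤ (∑ m ∈ Finset.range d,
      (KFBp A n m)ᵀ * (H (n + m))ᵀ * (Q (n + m))⁻¹ * H (n + m) * KFBp A n m).det


lemma psd_sand {a b : ℕ} {S : Matrix (Fin b) (Fin b) ℝ} (hS : S.PosSemidef)
    (B : Matrix (Fin a) (Fin b) ℝ) : (B * S * Bᵀ).PosSemidef := by
  have := hS.mul_mul_conjTranspose_same B
  rwa [Matrix.conjTranspose_eq_transpose_of_trivial] at this

lemma joseph {d q : ℕ} (S : Matrix (Fin d) (Fin d) ℝ) (Hm : Matrix (Fin q) (Fin d) ℝ)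
    (Qm R : Matrix (Fin q) (Fin q) ℝ) (K : Matrix (Fin d) (Fin q) ℝ)
    (hR : R = Hm * S * Hmᵀ + Qm) (hK : K = S * Hmᵀ * R⁻¹) (hu : IsUnit R.det) :
    (1 - K * Hm) * S = (1 - K * Hm) * S * (1 - K * Hm)ᵀ + K * Qm * Kᵀ := by
  have hRinv : R⁻¹ * R = 1 := Matrix.nonsing_inv_mul R hu
  have hKR : K * R = S * Hmᵀ := by
    rw [hK, Matrix.mul_assoc, hRinv, Matrix.mul_one]
  have key : (1 - K * Hm) * S * Hmᵀ = K * Qm := by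
    have h1 : (1 - K * Hm) * S * Hmᵀ = S * Hmᵀ - K * (Hm * S * Hmᵀ) := by
      simp [Matrix.sub_mul, Matrix.mul_assoc]
    rw [h1, ← hKR, hR, Matrix.mul_add]
    abel
  have hT : (1 - K * Hm)ᵀ = 1 - Hmᵀ * Kᵀ := by
    rw [Matrix.transpose_sub, Matrix.transpose_one, Matrix.transpose_mul]
  rw [hT, Matrix.mul_sub, Matrix.mul_one, ← Matrix.mul_assoc, key]
  abel

theorem kalman_aux {d q : ℕ} (A : ℕ → Matrix (Fin d) (Fin d) ℝ)
    (H : ℕ → Matrix (Fin q) (Fin d) ℝ) (Q : ℕ → Matrix (Fin q) (Fin q) ℝ)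
    (Δ0 : Matrix (Fin d) (Fin d) ℝ)
    (hQ : ∀ n, 1 ≤ n → (Q n).PosDef)
    (hΔ0 : Δ0.PosSemidef) :
    ∀ n, (KFDelta A H Q Δ0 n).PosSemidef ∧
      (KFDelta A H Q Δ0 n - KFM A H Q Δ0 n * Δ0 * (KFM A H Q Δ0 n)ᵀ).PosSemidef := by
  intro n
  induction n with
  | zero =>
      refine ⟨hΔ0, ?_⟩
      simp only [KFDelta, KFM, Matrix.one_mul, Matrix.transpose_one, Matrix.mul_one, sub_self]
      exact Matrix.PosSemidef.zero
  | succ n ih =>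
      obtain ⟨hΔ, hD⟩ := ih
      set Sg := KFSigma A H Q Δ0 n with hSgdef
      set Kn := KFGain A H Q Δ0 n with hKdef
      set Rn := H (n + 1) * Sg * (H (n + 1))ᵀ + Q (n + 1) with hRdef
      have hSgpsd : Sg.PosSemidef := psd_sand hΔ (A (n + 1))
      have hRpd : Rn.PosDef := Matrix.PosDef.posSemidef_add
        (psd_sand hSgpsd (H (n + 1))) (hQ (n + 1) (by omega))
      have hu : IsUnit Rn.det := isUnit_iff_ne_zero.mpr hRpd.det_pos.ne'
      have hJ := joseph Sg (H (n + 1)) (Q (n + 1)) Rn Kn hRdef rfl hu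
      have hΔsucc : KFDelta A H Q Δ0 (n + 1) = (1 - Kn * H (n + 1)) * Sg := rfl
      have hMsucc : KFM A H Q Δ0 (n + 1)
          = (1 - Kn * H (n + 1)) * A (n + 1) * KFM A H Q Δ0 n := rfl
      set X := (1 - Kn * H (n + 1)) * A (n + 1) with hXdef
      have hΔexp : KFDelta A H Q Δ0 (n + 1)
          = X * KFDelta A H Q Δ0 n * Xᵀ + Kn * Q (n + 1) * Knᵀ := by
        rw [hΔsucc, hJ, hXdef, hSgdef]
        simp only [KFSigma, Matrix.transpose_mul]
        noncomm_ring
      constructor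
      · rw [hΔexp]
        exact (psd_sand hΔ X).add (psd_sand (hQ (n + 1) (by omega)).posSemidef Kn)
      · have hgoal : KFDelta A H Q Δ0 (n + 1)
            - KFM A H Q Δ0 (n + 1) * Δ0 * (KFM A H Q Δ0 (n + 1))ᵀ
            = X * (KFDelta A H Q Δ0 n - KFM A H Q Δ0 n * Δ0 * (KFM A H Q Δ0 n)ᵀ) * Xᵀ
              + Kn * Q (n + 1) * Knᵀ := by
          rw [hΔexp, hMsucc]
          simp only [Matrix.transpose_mul]
          noncomm_ring
        rw [hgoal]
        exact (psd_sand hD X).add (psd_sand (hQ (n + 1) (by omega)).posSemidef Kn)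

/-- In the perfect-model Kalman filter recursion, for every `n ≥ 1` the
matrix `Δ_n − M_n Δ_0 M_nᵀ` is positive semidefinite. -/
theorem kalman_analysis_covariance_ge_sandwich
    {d q : ℕ} (A : ℕ → Matrix (Fin d) (Fin d) ℝ)
    (H : ℕ → Matrix (Fin q) (Fin d) ℝ) (Q : ℕ → Matrix (Fin q) (Fin q) ℝ)
    (Δ0 : Matrix (Fin d) (Fin d) ℝ)
    (hA : ∀ n, 1 ≤ n → IsUnit (A n).det)
    (hQ : ∀ n, 1 ≤ n → (Q n).PosDef)
    (hΔ0 : Δ0.PosSemidef) :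
    ∀ n, 1 ≤ n →
      (KFDelta A H Q Δ0 n - KFM A H Q Δ0 n * Δ0 * (KFM A H Q Δ0 n)ᵀ).PosSemidef := by
  intro n _
  exact (kalman_aux A H Q Δ0 hQ hΔ0 n).2
end

section
/- In the perfect-model Kalman filter recursion, suppose Δ_0 is symmetric positive definite and the analysis covariances are uniformly bounded, i.e. there is a constant c_Δ with ‖Δ_n‖ ≤ c_Δ for all n ≥ 1. Then the matrices M_n are uniformly bounded: ‖M_n‖ ≤ √(c_Δ / λ_min(Δ_0)) for all n ≥ 1, where λ_min(Δ_0) > 0 is the smallest eigenvalue of Δ_0. -/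
open Matrix Filter

section KalmanAux

variable {d e q : ℕ}

lemma euclid_inner_eq (v w : Fin d → ℝ) :
    (inner ℝ ((WithLp.equiv 2 (Fin d → ℝ)).symm v) ((WithLp.equiv 2 (Fin d → ℝ)).symm w) : ℝ)
      = v ⬝ᵥ w := by
  simp [PiLp.inner_apply, dotProduct, RCLike.inner_apply, mul_comm]

lemma opNorm_mulVec_le (Z : Matrix (Fin e) (Fin d) ℝ) (v : Fin d → ℝ) :
    ‖(WithLp.equiv 2 (Fin e → ℝ)).symm (Z *ᵥ v)‖
      ≤ opNorm Z * ‖(WithLp.equiv 2 (Fin d → ℝ)).symm v‖ := by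
  have := (LinearMap.toContinuousLinearMap (Matrix.toEuclideanLin Z)).le_opNorm
    ((WithLp.equiv 2 (Fin d → ℝ)).symm v)
  simpa [opNorm, Matrix.toEuclideanLin_apply_piLp_toLp] using this

lemma opNorm_le_bound' (Z : Matrix (Fin e) (Fin d) ℝ) {C : ℝ} (hC : 0 ≤ C)
    (h : ∀ v : Fin d → ℝ, ‖(WithLp.equiv 2 (Fin e → ℝ)).symm (Z *ᵥ v)‖
      ≤ C * ‖(WithLp.equiv 2 (Fin d → ℝ)).symm v‖) : opNorm Z ≤ C := by
  refine ContinuousLinearMap.opNorm_le_bound _ hC fun x => ?_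
  have := h ((WithLp.equiv 2 (Fin d → ℝ)) x)
  simpa [Matrix.toEuclideanLin_apply] using this

lemma dot_mulVec_left (M : Matrix (Fin e) (Fin d) ℝ) (v : Fin d → ℝ) (w : Fin e → ℝ) :
    (M *ᵥ v) ⬝ᵥ w = v ⬝ᵥ (Mᵀ *ᵥ w) := by
  rw [dotProduct_comm, dotProduct_mulVec, ← Matrix.mulVec_transpose, dotProduct_comm]

lemma dot_mulVec (M : Matrix (Fin e) (Fin d) ℝ) (v : Fin e → ℝ) (w : Fin d → ℝ) :
    v ⬝ᵥ (M *ᵥ w) = (Mᵀ *ᵥ v) ⬝ᵥ w := by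
  rw [dotProduct_comm, dot_mulVec_left, dotProduct_comm]

lemma quad_le_opNorm (Z : Matrix (Fin d) (Fin d) ℝ) (v : Fin d → ℝ) :
    v ⬝ᵥ Z *ᵥ v ≤ opNorm Z * (v ⬝ᵥ v) := by
  set v' := (WithLp.equiv 2 (Fin d → ℝ)).symm v with hv'
  set w' := (WithLp.equiv 2 (Fin d → ℝ)).symm (Z *ᵥ v) with hw'
  have h3 : ‖w'‖ ≤ opNorm Z * ‖v'‖ := opNorm_mulVec_le Z v
  have h4 : v ⬝ᵥ v = ‖v'‖ * ‖v'‖ := by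
    rw [← real_inner_self_eq_norm_mul_norm, euclid_inner_eq]
  calc v ⬝ᵥ Z *ᵥ v = (inner ℝ v' w' : ℝ) := (euclid_inner_eq v (Z *ᵥ v)).symm
    _ ≤ ‖v'‖ * ‖w'‖ := real_inner_le_norm v' w'
    _ ≤ ‖v'‖ * (opNorm Z * ‖v'‖) := mul_le_mul_of_nonneg_left h3 (norm_nonneg v')
    _ = opNorm Z * (v ⬝ᵥ v) := by rw [h4]; ring

lemma dot_eq_normsq (v : Fin d → ℝ) :
    v ⬝ᵥ v = ‖(WithLp.equiv 2 (Fin d → ℝ)).symm v‖ ^ 2 := by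
  rw [← real_inner_self_eq_norm_sq, euclid_inner_eq]

lemma quad_ge_iInf_eigen {Δ0 : Matrix (Fin d) (Fin d) ℝ} (h : Δ0.IsHermitian)
    (v : Fin d → ℝ) :
    (⨅ i, h.eigenvalues i) * (v ⬝ᵥ v) ≤ v ⬝ᵥ Δ0 *ᵥ v := by
  rcases Nat.eq_zero_or_pos d with hd | hd
  · subst hd
    simp [dotProduct]
  haveI : NeZero d := ⟨hd.ne'⟩
  set U : Matrix (Fin d) (Fin d) ℝ :=
    (Matrix.IsHermitian.eigenvectorUnitary h : Matrix (Fin d) (Fin d) ℝ) with hU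
  have hstar : star U = Uᵀ := by
    rw [Matrix.star_eq_conjTranspose, Matrix.conjTranspose_eq_transpose_of_trivial]
  have hUU : U * Uᵀ = 1 := by
    rw [← hstar]
    exact (Matrix.mem_unitaryGroup_iff).mp (Matrix.IsHermitian.eigenvectorUnitary h).2
  set z := Uᵀ *ᵥ v with hz
  have hzz : v ⬝ᵥ v = z ⬝ᵥ z := by
    calc v ⬝ᵥ v = v ⬝ᵥ (U * Uᵀ) *ᵥ v := by rw [hUU, Matrix.one_mulVec]
    _ = v ⬝ᵥ (U *ᵥ (Uᵀ *ᵥ v)) := by rw [Matrix.mulVec_mulVec]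
    _ = z ⬝ᵥ z := by rw [dot_mulVec, hz]
  have hquad : v ⬝ᵥ Δ0 *ᵥ v = ∑ i, h.eigenvalues i * z i ^ 2 := by
    conv_lhs => rw [h.spectral_theorem, Unitary.conjStarAlgAut_apply]
    rw [hstar, ← Matrix.mulVec_mulVec, ← Matrix.mulVec_mulVec, dot_mulVec, ← hz]
    simp only [dotProduct, Matrix.mulVec_diagonal]
    exact Finset.sum_congr rfl fun i _ => by
      simp [Function.comp]; ring
  rw [hquad, hzz, dotProduct, Finset.mul_sum]
  refine Finset.sum_le_sum fun i _ => ?_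
  have h1 : (⨅ j, h.eigenvalues j) ≤ h.eigenvalues i :=
    ciInf_le (Set.Finite.bddBelow (Set.finite_range _)) i
  have h2 := mul_self_nonneg (z i)
  calc (⨅ j, h.eigenvalues j) * (z i * z i) ≤ h.eigenvalues i * (z i * z i) := by nlinarith
  _ = h.eigenvalues i * z i ^ 2 := by ring

lemma bound_of_sandwich {M Δ Δ0 : Matrix (Fin d) (Fin d) ℝ} (hΔ0 : Δ0.PosDef)
    (hP : (Δ - M * Δ0 * Mᵀ).PosSemidef) {c : ℝ} (hc : opNorm Δ ≤ c) :
    opNorm M ≤ Real.sqrt (c / ⨅ i, hΔ0.1.eigenvalues i) := by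
  rcases Nat.eq_zero_or_pos d with hd | hd
  · refine le_trans ?_ (Real.sqrt_nonneg _)
    refine opNorm_le_bound' M le_rfl fun v => ?_
    subst hd
    have hx : ((WithLp.equiv 2 (Fin 0 → ℝ)).symm (M *ᵥ v)) = 0 := Subsingleton.elim _ _
    rw [hx, norm_zero, zero_mul]
  haveI : NeZero d := ⟨hd.ne'⟩
  set lam := ⨅ i, hΔ0.1.eigenvalues i with hlam
  have hlampos : 0 < lam := by
    obtain ⟨i0, hi0⟩ := Finite.exists_min hΔ0.1.eigenvalues
    have h1 : hΔ0.1.eigenvalues i0 ≤ lam := le_ciInf hi0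
    exact lt_of_lt_of_le (hΔ0.eigenvalues_pos i0) h1
  have hcnn : 0 ≤ c := by
    have := quad_le_opNorm Δ 0
    have h0 : (0 : Fin d → ℝ) ⬝ᵥ (0 : Fin d → ℝ) = 0 := by simp
    -- opNorm Δ ≥ 0
    exact le_trans (norm_nonneg _) hc
  have key : ∀ v : Fin d → ℝ, lam * ((Mᵀ *ᵥ v) ⬝ᵥ (Mᵀ *ᵥ v)) ≤ c * (v ⬝ᵥ v) := by
    intro v
    have h1 := quad_ge_iInf_eigen hΔ0.1 (Mᵀ *ᵥ v)
    have h2 : v ⬝ᵥ (M * Δ0 * Mᵀ) *ᵥ v = (Mᵀ *ᵥ v) ⬝ᵥ Δ0 *ᵥ (Mᵀ *ᵥ v) := by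
      rw [← Matrix.mulVec_mulVec, ← Matrix.mulVec_mulVec, dot_mulVec M]
    have h3 : v ⬝ᵥ (M * Δ0 * Mᵀ) *ᵥ v ≤ v ⬝ᵥ Δ *ᵥ v := by
      have := hP.dotProduct_mulVec_nonneg v
      simp only [star_trivial, Matrix.sub_mulVec, dotProduct_sub] at this
      linarith
    have h4 := quad_le_opNorm Δ v
    have h5 : v ⬝ᵥ v ≥ 0 := Finset.sum_nonneg fun i _ => mul_self_nonneg _
    have h6 : opNorm Δ * (v ⬝ᵥ v) ≤ c * (v ⬝ᵥ v) := mul_le_mul_of_nonneg_right hc h5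
    linarith
  set K := Real.sqrt (c / lam) with hK
  have hKnn : 0 ≤ K := Real.sqrt_nonneg _
  have hnorm : ∀ v : Fin d → ℝ, ‖(WithLp.equiv 2 (Fin d → ℝ)).symm (Mᵀ *ᵥ v)‖
      ≤ K * ‖(WithLp.equiv 2 (Fin d → ℝ)).symm v‖ := by
    intro v
    have h1 := key v
    rw [dot_eq_normsq, dot_eq_normsq] at h1
    set a := ‖(WithLp.equiv 2 (Fin d → ℝ)).symm (Mᵀ *ᵥ v)‖
    set b := ‖(WithLp.equiv 2 (Fin d → ℝ)).symm v‖
    have ha : 0 ≤ a := norm_nonneg _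
    have hb : 0 ≤ b := norm_nonneg _
    have h2 : a ^ 2 ≤ (c / lam) * b ^ 2 := by
      rw [div_mul_eq_mul_div, le_div_iff₀ hlampos]
      nlinarith
    calc a = Real.sqrt (a ^ 2) := (Real.sqrt_sq ha).symm
      _ ≤ Real.sqrt ((c / lam) * b ^ 2) := Real.sqrt_le_sqrt h2
      _ = K * b := by
          rw [Real.sqrt_mul (by positivity), Real.sqrt_sq hb]
  refine opNorm_le_bound' M hKnn fun v => ?_
  set u := M *ᵥ v with hu
  set a := ‖(WithLp.equiv 2 (Fin d → ℝ)).symm u‖ with hadef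
  set b := ‖(WithLp.equiv 2 (Fin d → ℝ)).symm v‖ with hbdef
  have ha : 0 ≤ a := norm_nonneg _
  have hb : 0 ≤ b := norm_nonneg _
  have h1 : a ^ 2 = u ⬝ᵥ u := (dot_eq_normsq u).symm
  have h2 : u ⬝ᵥ u = v ⬝ᵥ (Mᵀ *ᵥ u) := by
    rw [hu]; rw [dot_mulVec_left]
  have h3 : v ⬝ᵥ (Mᵀ *ᵥ u) ≤ b * ‖(WithLp.equiv 2 (Fin d → ℝ)).symm (Mᵀ *ᵥ u)‖ := by
    calc v ⬝ᵥ (Mᵀ *ᵥ u) = (inner ℝ ((WithLp.equiv 2 (Fin d → ℝ)).symm v)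
        ((WithLp.equiv 2 (Fin d → ℝ)).symm (Mᵀ *ᵥ u)) : ℝ) := (euclid_inner_eq _ _).symm
      _ ≤ b * ‖(WithLp.equiv 2 (Fin d → ℝ)).symm (Mᵀ *ᵥ u)‖ := real_inner_le_norm _ _
  have h4 : ‖(WithLp.equiv 2 (Fin d → ℝ)).symm (Mᵀ *ᵥ u)‖ ≤ K * a := hnorm u
  have h5 : a ^ 2 ≤ b * (K * a) := by
    calc a ^ 2 = v ⬝ᵥ (Mᵀ *ᵥ u) := by rw [h1, h2]
      _ ≤ b * ‖(WithLp.equiv 2 (Fin d → ℝ)).symm (Mᵀ *ᵥ u)‖ := h3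
      _ ≤ b * (K * a) := mul_le_mul_of_nonneg_left h4 hb
  rcases eq_or_lt_of_le ha with h0 | h0
  · rw [← h0]; positivity
  · nlinarith

lemma real_transpose_eq {n m : ℕ} (Z : Matrix (Fin n) (Fin m) ℝ) : Zᴴ = Zᵀ :=
  Matrix.conjTranspose_eq_transpose_of_trivial Z

lemma psd_conj {n m : ℕ} {Z : Matrix (Fin n) (Fin n) ℝ} (hZ : Z.PosSemidef)
    (B : Matrix (Fin m) (Fin n) ℝ) : (B * Z * Bᵀ).PosSemidef := by
  have := hZ.mul_mul_conjTranspose_same B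
  rwa [real_transpose_eq] at this

lemma joseph_s5 {S : Matrix (Fin d) (Fin d) ℝ} {K : Matrix (Fin d) (Fin q) ℝ} {Q' : Matrix (Fin q) (Fin q) ℝ}
    (H' : Matrix (Fin q) (Fin d) ℝ) (hS : S.PosSemidef) (hQ : Q'.PosDef)
    (hK : K = S * H'ᵀ * (H' * S * H'ᵀ + Q')⁻¹) :
    (1 - K * H') * S = (1 - K * H') * S * (1 - K * H')ᵀ + K * Q' * Kᵀ := by
  set R := H' * S * H'ᵀ + Q' with hR
  have hSsym : Sᵀ = S := by
    have := hS.isHermitian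
    rwa [Matrix.IsHermitian, real_transpose_eq] at this
  have hRpd : R.PosDef := Matrix.PosDef.posSemidef_add (psd_conj hS H') hQ
  have hdet : IsUnit R.det := isUnit_iff_ne_zero.mpr hRpd.det_pos.ne'
  have h1 : R⁻¹ * R = 1 := Matrix.nonsing_inv_mul R hdet
  have hKR : K * R = S * H'ᵀ := by rw [hK, Matrix.mul_assoc (S * H'ᵀ) R⁻¹ R, h1, Matrix.mul_one]
  have key : (1 - K * H') * S * H'ᵀ = K * Q' := by
    have expand : (1 - K * H') * S * H'ᵀ = S * H'ᵀ - K * (H' * S * H'ᵀ) := by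
      simp only [Matrix.sub_mul, Matrix.one_mul, Matrix.mul_assoc]
    have hHSH : H' * S * H'ᵀ = R - Q' := by rw [hR, add_sub_cancel_right]
    rw [expand, hHSH, Matrix.mul_sub, hKR, sub_sub_cancel]
  have ht : (1 - K * H')ᵀ = 1 - H'ᵀ * Kᵀ := by
    rw [Matrix.transpose_sub, Matrix.transpose_one, Matrix.transpose_mul]
  rw [ht]
  have expand2 : (1 - K * H') * S * (1 - H'ᵀ * Kᵀ)
      = (1 - K * H') * S - ((1 - K * H') * S * H'ᵀ) * Kᵀ := by
    simp only [Matrix.mul_sub, Matrix.mul_one, Matrix.mul_assoc]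
  rw [expand2, key]
  abel

lemma KF_invariant {A : ℕ → Matrix (Fin d) (Fin d) ℝ}
    {H : ℕ → Matrix (Fin q) (Fin d) ℝ} {Q : ℕ → Matrix (Fin q) (Fin q) ℝ}
    {Δ0 : Matrix (Fin d) (Fin d) ℝ}
    (hQ : ∀ n, 1 ≤ n → (Q n).PosDef) (hΔ0 : Δ0.PosDef) :
    ∀ n, (KFDelta A H Q Δ0 n
      - KFM A H Q Δ0 n * Δ0 * (KFM A H Q Δ0 n)ᵀ).PosSemidef := by
  intro n
  induction n with
  | zero =>
      have h0 : KFDelta A H Q Δ0 0 = Δ0 := rfl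
      have h1 : KFM A H Q Δ0 0 = 1 := rfl
      rw [h0, h1, Matrix.transpose_one, Matrix.mul_one, Matrix.one_mul, sub_self]
      exact Matrix.PosSemidef.zero
  | succ n ih =>
      have hMΔM : (KFM A H Q Δ0 n * Δ0 * (KFM A H Q Δ0 n)ᵀ).PosSemidef :=
        psd_conj hΔ0.posSemidef _
      have hΔn : (KFDelta A H Q Δ0 n).PosSemidef := by
        have := ih.add hMΔM
        rwa [sub_add_cancel] at this
      have hS : (KFSigma A H Q Δ0 n).PosSemidef := psd_conj hΔn (A (n + 1))
      have jos := joseph_s5 (H (n + 1)) hS (hQ (n + 1) (by omega))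
        (rfl : KFGain A H Q Δ0 n = _)
      have hΔsucc : KFDelta A H Q Δ0 (n + 1)
          = (1 - KFGain A H Q Δ0 n * H (n + 1)) * KFSigma A H Q Δ0 n := rfl
      have hMsucc : KFM A H Q Δ0 (n + 1)
          = (1 - KFGain A H Q Δ0 n * H (n + 1)) * A (n + 1) * KFM A H Q Δ0 n := rfl
      have goal_eq : KFDelta A H Q Δ0 (n + 1)
            - KFM A H Q Δ0 (n + 1) * Δ0 * (KFM A H Q Δ0 (n + 1))ᵀ
          = KFGain A H Q Δ0 n * Q (n + 1) * (KFGain A H Q Δ0 n)ᵀ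
            + ((1 - KFGain A H Q Δ0 n * H (n + 1)) * A (n + 1))
              * (KFDelta A H Q Δ0 n - KFM A H Q Δ0 n * Δ0 * (KFM A H Q Δ0 n)ᵀ)
              * ((1 - KFGain A H Q Δ0 n * H (n + 1)) * A (n + 1))ᵀ := by
        rw [hΔsucc, hMsucc, jos]
        simp only [KFSigma, Matrix.transpose_mul, Matrix.transpose_sub, Matrix.transpose_one]
        noncomm_ring
      rw [goal_eq]
      exact (psd_conj (hQ (n + 1) (by omega)).posSemidef _).add (psd_conj ih _)

end KalmanAux


/-- In the perfect-model Kalman filter recursion, if `Δ_0` is symmetric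
positive definite and `‖Δ_n‖ ≤ c_Δ` for all `n ≥ 1`, then
`‖M_n‖ ≤ √(c_Δ / λ_min(Δ_0))` for all `n ≥ 1`, where `λ_min(Δ_0)` is the smallest
eigenvalue of `Δ_0`. -/
theorem kalman_M_uniformly_bounded
    {d q : ℕ} (A : ℕ → Matrix (Fin d) (Fin d) ℝ)
    (H : ℕ → Matrix (Fin q) (Fin d) ℝ) (Q : ℕ → Matrix (Fin q) (Fin q) ℝ)
    (Δ0 : Matrix (Fin d) (Fin d) ℝ)
    (hA : ∀ n, 1 ≤ n → IsUnit (A n).det)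
    (hQ : ∀ n, 1 ≤ n → (Q n).PosDef)
    (hΔ0 : Δ0.PosDef)
    (cΔ : ℝ) (hbound : ∀ n, 1 ≤ n → opNorm (KFDelta A H Q Δ0 n) ≤ cΔ) :
    ∀ n, 1 ≤ n →
      opNorm (KFM A H Q Δ0 n) ≤ Real.sqrt (cΔ / ⨅ i, hΔ0.1.eigenvalues i) := by
  intro n hn
  exact bound_of_sandwich hΔ0 (KF_invariant hQ hΔ0 n) (hbound n hn)
end

section
/- Let d ≥ 1 and for each n ≥ 1 let Δ_n, M_n, B_n, Δ_0 ∈ ℝ^{d×d} with: Δ_0, M_n, and B_n invertible; Δ_n = M_n Δ_0 B_nᵀ; Δ_n symmetric; and sup_n ‖M_n‖ ≤ c_M < ∞. Suppose there exist a k-dimensional subspace W ⊆ ℝ^d and constants C > 0, γ > 0 such that ‖B_n l‖ ≤ C e^{−γ n} ‖l‖ for all l ∈ W and all n ≥ 1. Then for every ε > 0 there exists N such that for all n ≥ N the symmetric matrix Δ_n has at least k eigenvalues (with multiplicity) of absolute value less than ε. -/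
open Matrix Filter

section Aux

open Polynomial Module

lemma herm_charpoly {d : ℕ} {A : Matrix (Fin d) (Fin d) ℝ} (hA : A.IsHermitian) :
    A.charpoly = ∏ i, (X - C (hA.eigenvalues i)) := by
  classical
  set U : Matrix (Fin d) (Fin d) ℝ := (hA.eigenvectorUnitary : Matrix (Fin d) (Fin d) ℝ) with hUdef
  have hU1 : U * star U = 1 := (Matrix.mem_unitaryGroup_iff).mp hA.eigenvectorUnitary.2
  have hD : A = U * Matrix.diagonal hA.eigenvalues * star U := by
    have := hA.spectral_theorem
    simpa [Function.comp] using this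
  have hcm : charmatrix A =
      ((C : ℝ →+* ℝ[X]).mapMatrix U) * charmatrix (Matrix.diagonal hA.eigenvalues)
        * ((C : ℝ →+* ℝ[X]).mapMatrix (star U)) := by
    rw [charmatrix, charmatrix, mul_sub, sub_mul]
    congr 1
    · rw [← (scalar_commute (X : ℝ[X]) (fun r => Commute.all _ _) ((C : ℝ →+* ℝ[X]).mapMatrix U)).eq,
        mul_assoc, ← _root_.map_mul, hU1]
      simp
    · rw [← _root_.map_mul, ← _root_.map_mul, ← hD]
  have hdetU : ((C : ℝ →+* ℝ[X]).mapMatrix U).det * ((C : ℝ →+* ℝ[X]).mapMatrix (star U)).det = 1 := by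
    rw [← det_mul, ← _root_.map_mul, hU1]
    simp
  have : A.charpoly = (Matrix.diagonal hA.eigenvalues).charpoly := by
    rw [Matrix.charpoly, hcm, det_mul, det_mul, mul_comm, ← mul_assoc,
      mul_comm _ ((C : ℝ →+* ℝ[X]).mapMatrix U).det, hdetU, one_mul]
    rfl
  rw [this]
  rw [Matrix.charpoly]
  have : charmatrix (Matrix.diagonal hA.eigenvalues)
      = Matrix.diagonal (fun i => (X : ℝ[X]) - C (hA.eigenvalues i)) := by
    ext i j
    by_cases h : i = j
    · subst h; simp [charmatrix_apply, Matrix.diagonal_apply_eq]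
    · simp [charmatrix_apply_ne _ _ _ h, Matrix.diagonal_apply_ne _ h]
  rw [this, Matrix.det_diagonal]

variable {d : ℕ} {A : Matrix (Fin d) (Fin d) ℝ} (hA : A.IsHermitian)

lemma apply_eigen (x : EuclideanSpace ℝ (Fin d)) :
    Matrix.toEuclideanLin A x
      = ∑ i, (hA.eigenvalues i * hA.eigenvectorBasis.repr x i) • hA.eigenvectorBasis i := by
  conv_lhs => rw [← hA.eigenvectorBasis.sum_repr x]
  rw [map_sum]
  refine Finset.sum_congr rfl fun i _ => ?_
  rw [_root_.map_smul]
  have : Matrix.toEuclideanLin A (hA.eigenvectorBasis i)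
      = hA.eigenvalues i • (hA.eigenvectorBasis i : EuclideanSpace ℝ (Fin d)) := by
    have h := hA.mulVec_eigenvectorBasis i
    apply (WithLp.equiv 2 (Fin d → ℝ)).injective
    simpa [Matrix.toEuclideanLin_apply] using h
  rw [this, smul_smul, mul_comm]

lemma repr_apply_eigen (x : EuclideanSpace ℝ (Fin d)) (j : Fin d) :
    hA.eigenvectorBasis.repr (Matrix.toEuclideanLin A x) j
      = hA.eigenvalues j * hA.eigenvectorBasis.repr x j := by
  rw [apply_eigen hA x, map_sum]
  have : ∀ i, hA.eigenvectorBasis.repr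
      ((hA.eigenvalues i * hA.eigenvectorBasis.repr x i) • hA.eigenvectorBasis i) j
      = if i = j then hA.eigenvalues i * hA.eigenvectorBasis.repr x i else 0 := by
    intro i
    rw [_root_.map_smul, hA.eigenvectorBasis.repr_self]
    simp [EuclideanSpace.single_apply, eq_comm]
  calc (∑ i, (hA.eigenvectorBasis.repr ((hA.eigenvalues i * hA.eigenvectorBasis.repr x i) • hA.eigenvectorBasis i))) j
      = ∑ i, (hA.eigenvectorBasis.repr ((hA.eigenvalues i * hA.eigenvectorBasis.repr x i) • hA.eigenvectorBasis i)) j :=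
        by rw [WithLp.ofLp_sum, Finset.sum_apply]
    _ = ∑ i, if i = j then hA.eigenvalues i * hA.eigenvectorBasis.repr x i else 0 :=
        Finset.sum_congr rfl fun i _ => this i
    _ = hA.eigenvalues j * hA.eigenvectorBasis.repr x j := by simp

lemma norm_sq_eigen (x : EuclideanSpace ℝ (Fin d)) :
    ‖x‖ ^ 2 = ∑ i, (hA.eigenvectorBasis.repr x i) ^ 2 := by
  rw [← hA.eigenvectorBasis.repr.norm_map x, EuclideanSpace.norm_eq, Real.sq_sqrt (by positivity)]
  simp [sq_abs]

lemma count_small_eigs {k : ℕ} (V : Submodule ℝ (EuclideanSpace ℝ (Fin d))) (hV : k ≤ finrank ℝ V)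
    {ε c : ℝ} (hc : 0 ≤ c) (hcε : c < ε)
    (hbound : ∀ x ∈ V, ‖Matrix.toEuclideanLin A x‖ ≤ c * ‖x‖) :
    k ≤ (Finset.univ.filter fun i => |hA.eigenvalues i| < ε).card := by
  classical
  by_contra hcon
  push_neg at hcon
  set b := hA.eigenvectorBasis with hb
  set S : Finset (Fin d) := Finset.univ.filter (fun i => ¬ |hA.eigenvalues i| < ε) with hS
  have hcards : (Finset.univ.filter fun i => |hA.eigenvalues i| < ε).card + S.card = d := by
    rw [hS, Finset.card_filter_add_card_filter_not]
    simp
  set E : Submodule ℝ (EuclideanSpace ℝ (Fin d)) :=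
    Submodule.span ℝ (b '' (S : Set (Fin d))) with hE
  have hfr : finrank ℝ E = S.card := by
    have hli : LinearIndependent ℝ (⇑b ∘ (Subtype.val : {i // i ∈ S} → Fin d)) :=
      (b.orthonormal.linearIndependent).comp _ Subtype.val_injective
    have hrg : Set.range (⇑b ∘ (Subtype.val : {i // i ∈ S} → Fin d)) = ⇑b '' (S : Set (Fin d)) := by
      rw [Set.range_comp, Subtype.range_coe]
    rw [hE, ← hrg, finrank_span_eq_card hli, Fintype.card_coe]
  have hsum := Submodule.finrank_sup_add_finrank_inf_eq E V
  have hle : finrank ℝ ↥(E ⊔ V) ≤ d := by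
    have := Submodule.finrank_le (E ⊔ V)
    simpa using this
  have hpos : 0 < finrank ℝ ↥(E ⊓ V) := by omega
  have hneb : E ⊓ V ≠ ⊥ := by
    intro h
    rw [h] at hpos
    simp at hpos
  obtain ⟨x, hxEV, hx0⟩ := Submodule.exists_mem_ne_zero_of_ne_bot hneb
  have hxE : x ∈ E := hxEV.1
  have hxV : x ∈ V := hxEV.2
  have hcoord : ∀ y ∈ E, ∀ i ∉ S, b.repr y i = 0 := by
    intro y hy
    induction hy using Submodule.span_induction with
    | mem y hy =>
      intro i hi
      obtain ⟨j, hj, rfl⟩ := hy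
      rw [b.repr_self]
      have hji : j ≠ i := fun h => hi (h ▸ hj)
      rw [EuclideanSpace.single_apply, if_neg (Ne.symm hji)]
    | zero => simp
    | add y z _ _ hy hz => intro i hi; simp [map_add, hy i hi, hz i hi]
    | smul a y _ hy => intro i hi; simp [_root_.map_smul, hy i hi]
  have hε : 0 < ε := lt_of_le_of_lt hc hcε
  have hTx : ‖Matrix.toEuclideanLin A x‖ ^ 2 = ∑ i, (hA.eigenvalues i * b.repr x i) ^ 2 := by
    rw [norm_sq_eigen hA]
    exact Finset.sum_congr rfl fun i _ => by rw [repr_apply_eigen hA]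
  have hxsq : ‖x‖ ^ 2 = ∑ i ∈ S, (b.repr x i) ^ 2 := by
    rw [norm_sq_eigen hA]
    refine (Finset.sum_subset (Finset.subset_univ S) ?_).symm
    intro i _ hi
    rw [hcoord x hxE i hi]
    ring
  have hTxS : ‖Matrix.toEuclideanLin A x‖ ^ 2 = ∑ i ∈ S, (hA.eigenvalues i * b.repr x i) ^ 2 := by
    rw [hTx]
    refine (Finset.sum_subset (Finset.subset_univ S) ?_).symm
    intro i _ hi
    rw [hcoord x hxE i hi]
    ring
  have hlow : ε ^ 2 * ‖x‖ ^ 2 ≤ ‖Matrix.toEuclideanLin A x‖ ^ 2 := by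
    rw [hTxS, hxsq, Finset.mul_sum]
    refine Finset.sum_le_sum fun i hi => ?_
    have hμ : ε ≤ |hA.eigenvalues i| := by
      rw [hS] at hi
      simp only [Finset.mem_filter] at hi
      exact le_of_not_gt hi.2
    have : ε ^ 2 ≤ (hA.eigenvalues i) ^ 2 := by
      have h2 := pow_le_pow_left₀ hε.le hμ 2
      simpa [sq_abs] using h2
    rw [mul_pow]
    exact mul_le_mul_of_nonneg_right this (sq_nonneg _)
  have hup : ‖Matrix.toEuclideanLin A x‖ ^ 2 ≤ c ^ 2 * ‖x‖ ^ 2 := by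
    have h1 := hbound x hxV
    have := mul_self_le_mul_self (norm_nonneg _) h1
    calc ‖Matrix.toEuclideanLin A x‖ ^ 2
        = ‖Matrix.toEuclideanLin A x‖ * ‖Matrix.toEuclideanLin A x‖ := sq ..
      _ ≤ (c * ‖x‖) * (c * ‖x‖) := this
      _ = c ^ 2 * ‖x‖ ^ 2 := by ring
  have hxpos : 0 < ‖x‖ ^ 2 := pow_pos (norm_pos_iff.mpr hx0) 2
  have : ε ^ 2 ≤ c ^ 2 := le_of_mul_le_mul_right (hlow.trans hup) hxpos
  nlinarith [this, hc, hcε]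

lemma toEuclideanLin_one' : Matrix.toEuclideanLin (1 : Matrix (Fin d) (Fin d) ℝ) = LinearMap.id := by
  apply LinearMap.ext
  intro x
  simp [Matrix.toEuclideanLin_apply]

lemma toEuclideanLin_mul (P Q : Matrix (Fin d) (Fin d) ℝ) :
    Matrix.toEuclideanLin (P * Q)
      = (Matrix.toEuclideanLin P).comp (Matrix.toEuclideanLin Q) := by
  apply LinearMap.ext
  intro x
  simp [Matrix.toEuclideanLin_apply, Matrix.mulVec_mulVec]

lemma opNorm_nonneg {e : ℕ} (Z : Matrix (Fin e) (Fin d) ℝ) : 0 ≤ opNorm Z := norm_nonneg _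

lemma le_opNorm_mul (Z : Matrix (Fin d) (Fin d) ℝ) (x : EuclideanSpace ℝ (Fin d)) :
    ‖Matrix.toEuclideanLin Z x‖ ≤ opNorm Z * ‖x‖ :=
  (LinearMap.toContinuousLinearMap (Matrix.toEuclideanLin Z)).le_opNorm x

lemma opNorm_transpose (Z : Matrix (Fin d) (Fin d) ℝ) : opNorm Zᵀ = opNorm Z := by
  have h1 : Zᵀ = Zᴴ := by
    ext i j
    simp [Matrix.conjTranspose_apply]
  rw [opNorm, h1, Matrix.toEuclideanLin_conjTranspose_eq_adjoint,
    LinearMap.adjoint_toContinuousLinearMap]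
  exact ContinuousLinearMap.adjoint.norm_map _

end Aux

/-- Suppose `Δ_n = M_n Δ_0 B_nᵀ` with `Δ_0`, `M_n`, `B_n` invertible, each
`Δ_n` symmetric, `‖M_n‖ ≤ c_M`, and there is a `k`-dimensional subspace `W` with
`‖B_n l‖ ≤ C e^{−γ n} ‖l‖` for `l ∈ W`. Then for every `ε > 0`, eventually `Δ_n` has at
least `k` eigenvalues (with multiplicity, i.e. as roots of its characteristic polynomial)
of absolute value less than `ε`. -/
theorem eventually_many_small_eigenvalues_of_decay
    {d : ℕ} (hd : 1 ≤ d) (k : ℕ)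
    (Δ M B : ℕ → Matrix (Fin d) (Fin d) ℝ) (Δ0 : Matrix (Fin d) (Fin d) ℝ)
    (hΔ0 : IsUnit Δ0.det)
    (hM : ∀ n, 1 ≤ n → IsUnit (M n).det)
    (hB : ∀ n, 1 ≤ n → IsUnit (B n).det)
    (hfac : ∀ n, 1 ≤ n → Δ n = M n * Δ0 * (B n)ᵀ)
    (hsym : ∀ n, 1 ≤ n → (Δ n).IsHermitian)
    (cM : ℝ) (hcM : ∀ n, 1 ≤ n → opNorm (M n) ≤ cM)
    (W : Submodule ℝ (EuclideanSpace ℝ (Fin d))) (hW : Module.finrank ℝ W = k)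
    (C γ : ℝ) (hC : 0 < C) (hγ : 0 < γ)
    (hdecay : ∀ l ∈ W, ∀ n : ℕ, 1 ≤ n →
      ‖Matrix.toEuclideanLin (B n) l‖ ≤ C * Real.exp (-γ * n) * ‖l‖) :
    ∀ ε > (0 : ℝ), ∃ N, ∀ n, N ≤ n →
      k ≤ Multiset.card ((Δ n).charpoly.roots.filter fun x => |x| < ε) := by
  classical
  intro ε hε
  have hcM0 : 0 ≤ cM := le_trans (opNorm_nonneg (M 1)) (hcM 1 le_rfl)
  set K : ℝ := C * (opNorm Δ0ᵀ * cM) with hK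
  have hK0 : 0 ≤ K := mul_nonneg hC.le (mul_nonneg (opNorm_nonneg _) hcM0)
  -- eventually K * exp (-γ n) < ε
  have htend : Tendsto (fun n : ℕ => K * Real.exp (-γ * n)) atTop (nhds 0) := by
    have h1 : Tendsto (fun n : ℕ => -γ * n) atTop atBot := by
      apply Tendsto.comp (tendsto_id.const_mul_atTop_of_neg (by linarith) )
      exact tendsto_natCast_atTop_atTop
    have h2 : Tendsto (fun n : ℕ => Real.exp (-γ * n)) atTop (nhds 0) :=
      Real.tendsto_exp_atBot.comp h1
    simpa using h2.const_mul K
  have hev : ∀ᶠ n : ℕ in atTop, K * Real.exp (-γ * n) < ε :=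
    (htend.eventually (eventually_lt_nhds hε)).mono fun n h => h
  obtain ⟨N0, hN0⟩ := eventually_atTop.mp hev
  refine ⟨max N0 1, fun n hn => ?_⟩
  have hn1 : 1 ≤ n := le_trans (le_max_right _ _) hn
  have hnN0 : N0 ≤ n := le_trans (le_max_left _ _) hn
  have hA := hsym n hn1
  -- the matrix P and the subspace V
  set P : Matrix (Fin d) (Fin d) ℝ := Δ0ᵀ * (M n)ᵀ with hP
  have hPdet : IsUnit P.det := by
    rw [hP, Matrix.det_mul, Matrix.det_transpose, Matrix.det_transpose]
    exact hΔ0.mul (hM n hn1)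
  have hΔBP : Δ n = B n * P := by
    have hsymm : (Δ n)ᵀ = Δ n := by
      have := hA
      rw [Matrix.IsHermitian] at this
      have h2 : (Δ n)ᴴ = (Δ n)ᵀ := by
        ext i j; simp [Matrix.conjTranspose_apply]
      rw [← h2, this]
    calc Δ n = (Δ n)ᵀ := hsymm.symm
      _ = (M n * Δ0 * (B n)ᵀ)ᵀ := by rw [hfac n hn1]
      _ = B n * (Δ0ᵀ * (M n)ᵀ) := by
          rw [Matrix.transpose_mul, Matrix.transpose_mul, Matrix.transpose_transpose]
      _ = B n * P := rfl
  -- the linear equivalence induced by P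
  have hPP : P * P⁻¹ = 1 := Matrix.mul_nonsing_inv P hPdet
  have hPP' : P⁻¹ * P = 1 := Matrix.nonsing_inv_mul P hPdet
  set e : EuclideanSpace ℝ (Fin d) ≃ₗ[ℝ] EuclideanSpace ℝ (Fin d) :=
    LinearEquiv.ofLinear (Matrix.toEuclideanLin P) (Matrix.toEuclideanLin P⁻¹)
      (by rw [← toEuclideanLin_mul, hPP, toEuclideanLin_one'])
      (by rw [← toEuclideanLin_mul, hPP', toEuclideanLin_one']) with he
  set V : Submodule ℝ (EuclideanSpace ℝ (Fin d)) := W.map (e.symm : _ →ₗ[ℝ] _) with hV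
  have hVrank : k ≤ Module.finrank ℝ V := by
    rw [hV, LinearEquiv.finrank_map_eq e.symm W, hW]
  have hmem : ∀ x ∈ V, Matrix.toEuclideanLin P x ∈ W := by
    intro x hx
    rw [hV, Submodule.mem_map] at hx
    obtain ⟨w, hw, rfl⟩ := hx
    change e (e.symm w) ∈ W
    rw [e.apply_symm_apply]
    exact hw
  -- the bound on V
  have hbound : ∀ x ∈ V, ‖Matrix.toEuclideanLin (Δ n) x‖ ≤ (K * Real.exp (-γ * n)) * ‖x‖ := by
    intro x hx
    have hw : Matrix.toEuclideanLin P x ∈ W := hmem x hx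
    have h1 : Matrix.toEuclideanLin (Δ n) x
        = Matrix.toEuclideanLin (B n) (Matrix.toEuclideanLin P x) := by
      rw [hΔBP, toEuclideanLin_mul]; rfl
    have h2 : ‖Matrix.toEuclideanLin P x‖ ≤ opNorm Δ0ᵀ * cM * ‖x‖ := by
      have h3 : Matrix.toEuclideanLin P x
          = Matrix.toEuclideanLin Δ0ᵀ (Matrix.toEuclideanLin (M n)ᵀ x) := by
        rw [hP, toEuclideanLin_mul]; rfl
      rw [h3]
      calc ‖Matrix.toEuclideanLin Δ0ᵀ (Matrix.toEuclideanLin (M n)ᵀ x)‖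
          ≤ opNorm Δ0ᵀ * ‖Matrix.toEuclideanLin (M n)ᵀ x‖ := le_opNorm_mul _ _
        _ ≤ opNorm Δ0ᵀ * (opNorm (M n)ᵀ * ‖x‖) :=
            mul_le_mul_of_nonneg_left (le_opNorm_mul _ _) (opNorm_nonneg _)
        _ ≤ opNorm Δ0ᵀ * (cM * ‖x‖) := by
            refine mul_le_mul_of_nonneg_left ?_ (opNorm_nonneg _)
            refine mul_le_mul_of_nonneg_right ?_ (norm_nonneg _)
            rw [opNorm_transpose]
            exact hcM n hn1
        _ = opNorm Δ0ᵀ * cM * ‖x‖ := by ring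
    calc ‖Matrix.toEuclideanLin (Δ n) x‖
        = ‖Matrix.toEuclideanLin (B n) (Matrix.toEuclideanLin P x)‖ := by rw [h1]
      _ ≤ C * Real.exp (-γ * n) * ‖Matrix.toEuclideanLin P x‖ :=
          hdecay _ hw n hn1
      _ ≤ C * Real.exp (-γ * n) * (opNorm Δ0ᵀ * cM * ‖x‖) :=
          mul_le_mul_of_nonneg_left h2 (mul_nonneg hC.le (Real.exp_nonneg _))
      _ = (K * Real.exp (-γ * n)) * ‖x‖ := by rw [hK]; ring
  -- count eigenvalues
  have hcount := count_small_eigs hA V hVrank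
    (mul_nonneg hK0 (Real.exp_nonneg _)) (hN0 n hnN0) hbound
  -- translate to charpoly roots
  rw [herm_charpoly hA, Finset.prod_eq_multiset_prod]
  have : (Finset.univ.val.map fun i => (Polynomial.X - Polynomial.C (hA.eigenvalues i)))
      = (Finset.univ.val.map hA.eigenvalues).map fun a => Polynomial.X - Polynomial.C a := by
    rw [Multiset.map_map]
    rfl
  rw [this, Polynomial.roots_multiset_prod_X_sub_C, Multiset.filter_map, Multiset.card_map]
  calc k ≤ (Finset.univ.filter fun i => |hA.eigenvalues i| < ε).card := hcount
    _ = Multiset.card (Multiset.filter ((fun x => |x| < ε) ∘ hA.eigenvalues) Finset.univ.val) := by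
        rw [← Finset.filter_val]
        rfl
end

section
/- Let λ ∈ ℂ, k ≥ 1, and let J_λ ∈ ℂ^{k×k} be the Jordan block with eigenvalue λ. For each n ≥ 1 let G_n = ((J_λ^n)ᴴ J_λ^n)^{1/(2n)}, the Hermitian positive semidefinite (1/2n)-th power (given by the continuous functional calculus) of the positive semidefinite matrix (J_λ^n)ᴴ J_λ^n. Then G_n converges to |λ| · I_k as n → ∞. -/
open Matrix Filter

/-- The `k × k` Jordan block with eigenvalue `lam`: `lam` on the diagonal, `1` on the
superdiagonal, `0` elsewhere. -/
def jordanBlock (lam : ℂ) (k : ℕ) : Matrix (Fin k) (Fin k) ℂ :=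
  Matrix.of fun i j => if (j : ℕ) = (i : ℕ) + 1 then 1 else if j = i then lam else 0

/-- The `t`-th power (for `t : ℝ`) of a positive semidefinite Hermitian matrix `P`, given by
applying `x ↦ x ^ t` to the eigenvalues of `P` in a spectral decomposition (continuous
functional calculus). -/
noncomputable def psdPow {k : ℕ} (P : Matrix (Fin k) (Fin k) ℂ) (hP : P.IsHermitian)
    (t : ℝ) : Matrix (Fin k) (Fin k) ℂ :=
  (hP.eigenvectorUnitary : Matrix (Fin k) (Fin k) ℂ) *
    Matrix.diagonal (fun i => ((hP.eigenvalues i ^ t : ℝ) : ℂ)) *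
    star (hP.eigenvectorUnitary : Matrix (Fin k) (Fin k) ℂ)

lemma jordanBlock_zero_pow_apply (k m : ℕ) (i j : Fin k) :
    ((jordanBlock 0 k) ^ m) i j = if (j : ℕ) = (i : ℕ) + m then 1 else 0 := by
  induction m generalizing i j with
  | zero => simp [Matrix.one_apply, Fin.ext_iff, eq_comm]
  | succ m ih =>
    rw [pow_succ, Matrix.mul_apply]
    by_cases hc : (i : ℕ) + m < k
    · have hj := j.isLt
      rw [Finset.sum_eq_single (⟨(i : ℕ) + m, hc⟩ : Fin k)]
      · rw [ih]
        simp only [if_pos rfl, one_mul, jordanBlock, Matrix.of_apply]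
        split_ifs <;> simp_all <;> omega
      · intro l _ hne
        rw [ih, if_neg, zero_mul]
        intro h
        exact hne (Fin.ext h)
      · intro h; exact absurd (Finset.mem_univ _) h
    · have hj := j.isLt
      rw [Finset.sum_eq_zero, if_neg (by omega)]
      intro l _
      have hl := l.isLt
      rw [ih, if_neg (by omega), zero_mul]

lemma jordanBlock_zero_pow_k (k : ℕ) : (jordanBlock 0 k) ^ k = 0 := by
  ext i j
  rw [jordanBlock_zero_pow_apply]
  have := j.isLt
  simp only [Matrix.zero_apply]
  rw [if_neg (by omega)]

lemma jordanBlock_eq (lam : ℂ) (k : ℕ) :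
    jordanBlock lam k = algebraMap ℂ (Matrix (Fin k) (Fin k) ℂ) lam + jordanBlock 0 k := by
  ext i j
  rw [Matrix.add_apply, Matrix.algebraMap_matrix_apply]
  simp only [jordanBlock, Matrix.of_apply]
  by_cases h1 : (j : ℕ) = (i : ℕ) + 1
  · have hne : ¬ i = j := fun h => by subst h; omega
    rw [if_pos h1, if_pos h1, if_neg hne, zero_add]
  · rw [if_neg h1, if_neg h1]
    by_cases h2 : j = i
    · subst h2; simp
    · rw [if_neg h2, if_neg (fun h => h2 h.symm)]; simp [h2]

lemma spectrum_nilpotent {A : Type*} [Ring A] [Algebra ℂ A] [Nontrivial A]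
    {N : A} (hN : IsNilpotent N) : spectrum ℂ N = {0} := by
  ext μ
  simp only [spectrum.mem_iff, Set.mem_singleton_iff]
  constructor
  · intro h
    by_contra hμ
    apply h
    have key : algebraMap ℂ A μ - N = algebraMap ℂ A μ * (1 - μ⁻¹ • N) := by
      rw [mul_sub, mul_one, mul_smul_comm, Algebra.algebraMap_eq_smul_one, smul_mul_assoc,
        one_mul, smul_smul, inv_mul_cancel₀ hμ, one_smul]
    rw [key]
    exact ((Ne.isUnit hμ).map (algebraMap ℂ A)).mul (hN.smul μ⁻¹).isUnit_one_sub
  · rintro rfl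
    rw [map_zero, zero_sub]
    exact fun h => hN.neg.not_isUnit h
lemma spectrum_algebraMap_add_nilpotent {A : Type*} [Ring A] [Algebra ℂ A] [Nontrivial A]
    {N : A} (hN : IsNilpotent N) (c : ℂ) :
    spectrum ℂ (algebraMap ℂ A c + N) = {c} := by
  rw [← spectrum.singleton_add_eq, spectrum_nilpotent hN, Set.singleton_add_singleton, add_zero]

lemma jordanBlock_det (lam : ℂ) (k : ℕ) : (jordanBlock lam k).det = lam ^ k := by
  rw [Matrix.det_of_upperTriangular]
  · have hd : ∀ i : Fin k, jordanBlock lam k i i = lam := by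
      intro i
      simp only [jordanBlock, Matrix.of_apply]
      rw [if_neg (by omega)]
      simp
    calc ∏ i : Fin k, jordanBlock lam k i i = ∏ _i : Fin k, lam := by
          exact Finset.prod_congr rfl (fun i _ => hd i)
      _ = lam ^ k := by rw [Finset.prod_const, Finset.card_univ, Fintype.card_fin]
  · intro i j hij
    simp only [jordanBlock, Matrix.of_apply, id] at hij ⊢
    rw [if_neg (by omega), if_neg (by exact fun h => by subst h; exact absurd hij (lt_irrefl _))]

lemma jordanBlock_isUnit (lam : ℂ) (k : ℕ) (h : lam ≠ 0) : IsUnit (jordanBlock lam k) := by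
  rw [Matrix.isUnit_iff_isUnit_det, jordanBlock_det]
  exact (pow_ne_zero k h).isUnit

lemma jordanBlock_nilpotent (k : ℕ) : IsNilpotent (jordanBlock 0 k) :=
  ⟨k, jordanBlock_zero_pow_k k⟩

lemma spectrum_jordanBlock (lam : ℂ) (k : ℕ) (hk : 1 ≤ k) :
    spectrum ℂ (jordanBlock lam k) = {lam} := by
  have : Nontrivial (Matrix (Fin k) (Fin k) ℂ) := by
    haveI : NeZero k := ⟨by omega⟩
    infer_instance
  rw [jordanBlock_eq]
  exact spectrum_algebraMap_add_nilpotent (jordanBlock_nilpotent k) lam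

lemma spectrum_jordanBlock_conjTranspose (lam : ℂ) (k : ℕ) (hk : 1 ≤ k) :
    spectrum ℂ ((jordanBlock lam k)ᴴ) = {(starRingEnd ℂ) lam} := by
  have : Nontrivial (Matrix (Fin k) (Fin k) ℂ) := by
    haveI : NeZero k := ⟨by omega⟩
    infer_instance
  have heq : (jordanBlock lam k)ᴴ =
      algebraMap ℂ (Matrix (Fin k) (Fin k) ℂ) ((starRingEnd ℂ) lam) + (jordanBlock 0 k)ᴴ := by
    rw [jordanBlock_eq, Matrix.conjTranspose_add]
    congr 1
    ext i j
    simp only [Matrix.conjTranspose_apply, Matrix.algebraMap_matrix_apply]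
    by_cases h : i = j
    · subst h; simp
    · rw [if_neg h, if_neg (fun hh => h hh.symm), star_zero]
  rw [heq]
  exact spectrum_algebraMap_add_nilpotent
    ⟨k, by rw [← Matrix.conjTranspose_pow, jordanBlock_zero_pow_k, Matrix.conjTranspose_zero]⟩ _

lemma spectrum_inv_of_isUnit {n : Type*} [Fintype n] [DecidableEq n]
    {M : Matrix n n ℂ} (hM : IsUnit M) {c : ℂ} (hs : spectrum ℂ M = {c}) :
    spectrum ℂ M⁻¹ = {c⁻¹} := by
  have h1 : (spectrum ℂ ((hM.unit : Matrix n n ℂ)))⁻¹ = spectrum ℂ ((hM.unit⁻¹ : (Matrix n n ℂ)ˣ) : Matrix n n ℂ) :=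
    spectrum.map_inv hM.unit
  rw [hM.unit_spec, hs, Matrix.coe_units_inv, hM.unit_spec] at h1
  rw [← h1, Set.inv_singleton]

section Key

attribute [local instance] Matrix.linftyOpNormedRing Matrix.linftyOpNormedAlgebra

lemma gelfand_limit {A : Type*} [NormedRing A] [NormedAlgebra ℂ A] [CompleteSpace A]
    (a : A) (c : ℂ) (hc : spectrum ℂ a = {c}) :
    Tendsto (fun n : ℕ => ‖a ^ n‖ ^ (1 / n : ℝ)) atTop (nhds ‖c‖) := by
  have hr : spectralRadius ℂ a = (‖c‖₊ : ENNReal) := by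
    rw [spectralRadius, hc]
    simp
  have h := spectrum.pow_norm_pow_one_div_tendsto_nhds_spectralRadius a
  rw [hr] at h
  have h2 := (ENNReal.tendsto_toReal (ENNReal.coe_ne_top)).comp h
  simp only [Function.comp_def] at h2
  have h3 : ∀ n : ℕ, (ENNReal.ofReal (‖a ^ n‖ ^ (1 / n : ℝ))).toReal = ‖a ^ n‖ ^ (1 / n : ℝ) :=
    fun n => ENNReal.toReal_ofReal (Real.rpow_nonneg (norm_nonneg _) _)
  have h4 : ((‖c‖₊ : ENNReal)).toReal = ‖c‖ := by
    simp
  rw [← h4]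
  exact h2.congr h3

/-- combine two Gelfand limits into the limit of `(‖X^n‖*‖Y^n‖)^(1/(2n))`. -/
lemma combined_limit {k : ℕ} (X Y : Matrix (Fin k) (Fin k) ℂ) (c : ℝ) (hc : 0 ≤ c)
    (hX : Tendsto (fun n : ℕ => ‖X ^ n‖ ^ (1 / n : ℝ)) atTop (nhds c))
    (hY : Tendsto (fun n : ℕ => ‖Y ^ n‖ ^ (1 / n : ℝ)) atTop (nhds c)) :
    Tendsto (fun n : ℕ => (‖X ^ n‖ * ‖Y ^ n‖) ^ (1 / (2 * n) : ℝ)) atTop (nhds c) := by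
  have h1 := hX.mul hY
  have h2 := h1.rpow_const (p := (1 : ℝ) / 2) (Or.inr (by norm_num))
  have h3 : (c * c) ^ ((1 : ℝ) / 2) = c := by
    rw [← Real.sqrt_eq_rpow, Real.sqrt_mul_self hc]
  rw [h3] at h2
  refine h2.congr fun n => ?_
  rw [← Real.mul_rpow (norm_nonneg _) (norm_nonneg _), ← Real.rpow_mul
    (mul_nonneg (norm_nonneg _) (norm_nonneg _))]
  congr 1
  rcases Nat.eq_zero_or_pos n with h | h
  · simp [h]
  · have : (n : ℝ) ≠ 0 := Nat.cast_ne_zero.mpr (by omega)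
    field_simp

lemma jordan_key (lam : ℂ) (k : ℕ) (hk : 1 ≤ k) :
    ∃ B : ℕ → ℝ, Tendsto B atTop (nhds 0) ∧ ∀ n : ℕ, 1 ≤ n → ∀ i,
      |(Matrix.isHermitian_conjTranspose_mul_self (jordanBlock lam k ^ n)).eigenvalues i ^
        (1 / (2 * (n : ℝ))) - ‖lam‖| ≤ B n := by
  haveI : NeZero k := ⟨by omega⟩
  set J := jordanBlock lam k with hJdef
  set L := ‖lam‖ with hLdef
  have hL0 : 0 ≤ L := norm_nonneg lam
  -- upper-bound sequence
  have hb : Tendsto (fun n : ℕ => ‖J ^ n‖ ^ (1 / n : ℝ)) atTop (nhds L) :=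
    gelfand_limit _ _ (spectrum_jordanBlock lam k hk)
  have ha : Tendsto (fun n : ℕ => ‖(Jᴴ) ^ n‖ ^ (1 / n : ℝ)) atTop (nhds L) := by
    have h := gelfand_limit _ _ (spectrum_jordanBlock_conjTranspose lam k hk)
    simpa using h
  set UB : ℕ → ℝ := fun n => (‖(Jᴴ) ^ n‖ * ‖J ^ n‖) ^ (1 / (2 * n) : ℝ) with hUBdef
  have hUBt : Tendsto UB atTop (nhds L) := combined_limit _ _ _ hL0 ha hb
  -- lower-bound sequence
  have hLB : ∃ LB : ℕ → ℝ, Tendsto LB atTop (nhds L) ∧ ∀ n : ℕ, ∀ i,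
      LB n ≤ (Matrix.isHermitian_conjTranspose_mul_self (J ^ n)).eigenvalues i ^
        (1 / (2 * (n : ℝ))) := by
    rcases eq_or_ne lam 0 with hlam | hlam
    · refine ⟨fun _ => 0, ?_, ?_⟩
      · have : L = 0 := by rw [hLdef, hlam, norm_zero]
        rw [this]
        exact tendsto_const_nhds
      · intro n i
        exact Real.rpow_nonneg (Matrix.eigenvalues_conjTranspose_mul_self_nonneg (J ^ n) i) _
    · have hJu : IsUnit J := jordanBlock_isUnit lam k hlam
      have hJHu : IsUnit (Jᴴ) := (Matrix.isUnit_conjTranspose _).mpr hJu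
      have hLne : L ≠ 0 := by
        rw [hLdef]
        simpa using hlam
      -- Gelfand limits for inverses
      have hbi : Tendsto (fun n : ℕ => ‖(J⁻¹) ^ n‖ ^ (1 / n : ℝ)) atTop (nhds L⁻¹) := by
        have h := gelfand_limit (J⁻¹) (lam⁻¹)
          (spectrum_inv_of_isUnit hJu (spectrum_jordanBlock lam k hk))
        simpa [map_inv₀] using h
      have hai : Tendsto (fun n : ℕ => ‖((Jᴴ)⁻¹) ^ n‖ ^ (1 / n : ℝ)) atTop (nhds L⁻¹) := by
        have h := gelfand_limit ((Jᴴ)⁻¹) (((starRingEnd ℂ) lam)⁻¹)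
          (spectrum_inv_of_isUnit hJHu (spectrum_jordanBlock_conjTranspose lam k hk))
        simpa [map_inv₀] using h
      refine ⟨fun n => ((‖(J⁻¹) ^ n‖ * ‖((Jᴴ)⁻¹) ^ n‖) ^ (1 / (2 * n) : ℝ))⁻¹, ?_, ?_⟩
      · have h1 := combined_limit (J⁻¹) ((Jᴴ)⁻¹) L⁻¹ (inv_nonneg.mpr hL0) hbi hai
        have h2 := h1.inv₀ (inv_ne_zero hLne)
        simpa using h2
      · intro n i
        set μ := (Matrix.isHermitian_conjTranspose_mul_self (J ^ n)).eigenvalues i with hμdef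
        have hμ0 : 0 ≤ μ := Matrix.eigenvalues_conjTranspose_mul_self_nonneg (J ^ n) i
        have hmem : (μ : ℂ) ∈ spectrum ℂ ((J ^ n)ᴴ * J ^ n) := by
          have h := (Matrix.isHermitian_conjTranspose_mul_self (J ^ n)).eigenvalues_mem_spectrum_real i
          have h2 := spectrum.algebraMap_mem ℂ h
          rwa [show (algebraMap ℝ ℂ) μ = (μ : ℂ) from congrFun Complex.coe_algebraMap μ] at h2
        have hPu : IsUnit ((J ^ n)ᴴ * J ^ n) :=
          ((Matrix.isUnit_conjTranspose _).mpr (hJu.pow n)).mul (hJu.pow n)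
        have hμne : μ ≠ 0 := by
          intro h0
          rw [h0] at hmem
          exact (spectrum.zero_notMem_iff ℂ).mpr hPu (by simpa using hmem)
        have hμpos : 0 < μ := lt_of_le_of_ne hμ0 (Ne.symm hμne)
        -- pass to the inverse
        have hinv_mem : ((μ : ℂ))⁻¹ ∈ spectrum ℂ (((J ^ n)ᴴ * J ^ n)⁻¹) := by
          set r : ℂˣ := Units.mk0 (μ : ℂ) (by exact_mod_cast hμne) with hrdef
          have hmem' : (r : ℂ) ∈ spectrum ℂ ((hPu.unit : Matrix (Fin k) (Fin k) ℂ)) := by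
            rw [hPu.unit_spec]
            exact hmem
          have h := spectrum.inv_mem_iff.mp hmem'
          rwa [Matrix.coe_units_inv, hPu.unit_spec] at h
        have habs : ‖((μ : ℂ))⁻¹‖ ≤ ‖((J ^ n)ᴴ * J ^ n)⁻¹‖ :=
          spectrum.norm_le_norm_of_mem hinv_mem
        have hPinv : ((J ^ n)ᴴ * J ^ n)⁻¹ = (J⁻¹) ^ n * ((Jᴴ)⁻¹) ^ n := by
          rw [Matrix.mul_inv_rev]
          congr 1
          · rw [Matrix.inv_pow']
          · rw [Matrix.conjTranspose_pow, ← Matrix.inv_pow']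
        set w : ℝ := ‖(J⁻¹) ^ n‖ * ‖((Jᴴ)⁻¹) ^ n‖ with hwdef
        have hμinvle : μ⁻¹ ≤ w := by
          calc μ⁻¹ ≤ |μ⁻¹| := le_abs_self _
            _ = ‖((μ : ℂ))⁻¹‖ := by
                rw [← Complex.ofReal_inv, Complex.norm_real, Real.norm_eq_abs]
            _ ≤ ‖((J ^ n)ᴴ * J ^ n)⁻¹‖ := habs
            _ ≤ w := by rw [hPinv, hwdef]; exact norm_mul_le _ _
        have hwpos : 0 < w := lt_of_lt_of_le (inv_pos.mpr hμpos) hμinvle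
        have hlow : w⁻¹ ≤ μ := by
          have h := one_div_le_one_div_of_le (inv_pos.mpr hμpos) hμinvle
          rwa [one_div, one_div, inv_inv] at h
        have h1 := Real.rpow_le_rpow (inv_nonneg.mpr hwpos.le) hlow
          (by positivity : (0:ℝ) ≤ 1 / (2 * (n : ℝ)))
        rwa [Real.inv_rpow hwpos.le] at h1
  obtain ⟨LB, hLBt, hLBle⟩ := hLB
  -- upper bound on eigenvalue powers
  have hUBle : ∀ n : ℕ, ∀ i,
      (Matrix.isHermitian_conjTranspose_mul_self (J ^ n)).eigenvalues i ^
        (1 / (2 * (n : ℝ))) ≤ UB n := by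
    intro n i
    set μ := (Matrix.isHermitian_conjTranspose_mul_self (J ^ n)).eigenvalues i with hμdef
    have hμ0 : 0 ≤ μ := Matrix.eigenvalues_conjTranspose_mul_self_nonneg (J ^ n) i
    have hmem : (μ : ℂ) ∈ spectrum ℂ ((J ^ n)ᴴ * J ^ n) := by
      have h := (Matrix.isHermitian_conjTranspose_mul_self (J ^ n)).eigenvalues_mem_spectrum_real i
      have h2 := spectrum.algebraMap_mem ℂ h
      rwa [show (algebraMap ℝ ℂ) μ = (μ : ℂ) from congrFun Complex.coe_algebraMap μ] at h2
    have h1 : ‖(μ : ℂ)‖ ≤ ‖(J ^ n)ᴴ * J ^ n‖ := spectrum.norm_le_norm_of_mem hmem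
    have h2 : μ ≤ ‖(Jᴴ) ^ n‖ * ‖J ^ n‖ := by
      calc μ ≤ |μ| := le_abs_self μ
        _ = ‖(μ : ℂ)‖ := by rw [Complex.norm_real, Real.norm_eq_abs]
        _ ≤ ‖(J ^ n)ᴴ * J ^ n‖ := h1
        _ ≤ ‖(J ^ n)ᴴ‖ * ‖J ^ n‖ := norm_mul_le _ _
        _ = ‖(Jᴴ) ^ n‖ * ‖J ^ n‖ := by rw [Matrix.conjTranspose_pow]
    have := Real.rpow_le_rpow hμ0 h2 (by positivity : (0:ℝ) ≤ 1 / (2 * (n : ℝ)))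
    simpa [hUBdef] using this
  -- assemble
  refine ⟨fun n => |UB n - L| + |LB n - L|, ?_, ?_⟩
  · have h1 : Tendsto (fun n => |UB n - L|) atTop (nhds 0) := by
      have := (hUBt.sub_const L).abs
      simpa using this
    have h2 : Tendsto (fun n => |LB n - L|) atTop (nhds 0) := by
      have := (hLBt.sub_const L).abs
      simpa using this
    simpa using h1.add h2
  · intro n hn i
    have hu := hUBle n i
    have hl := hLBle n i
    have e1 : UB n - L ≤ |UB n - L| := le_abs_self _
    have e2 : -(LB n - L) ≤ |LB n - L| := neg_le_abs _
    rw [abs_le]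
    constructor <;> nlinarith [abs_nonneg (UB n - L), abs_nonneg (LB n - L)]

end Key

lemma unitary_entry_norm_le_one {k : ℕ} (U : Matrix (Fin k) (Fin k) ℂ)
    (hU : U * star U = 1) (i l : Fin k) : ‖U i l‖ ≤ 1 := by
  have h3 : (U * star U) i i = (1 : Matrix (Fin k) (Fin k) ℂ) i i := by rw [hU]
  rw [Matrix.mul_apply, Matrix.one_apply_eq] at h3
  have h4 : ∑ m, (Complex.normSq (U i m) : ℂ) = 1 := by
    rw [← h3]
    refine Finset.sum_congr rfl fun m _ => ?_
    rw [Matrix.star_apply]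
    exact (Complex.mul_conj (U i m)).symm
  have h5 : ∑ m, Complex.normSq (U i m) = 1 := by
    have := congrArg Complex.re h4
    simpa using this
  have h6 : Complex.normSq (U i l) ≤ 1 := by
    rw [← h5]
    exact Finset.single_le_sum (fun m _ => Complex.normSq_nonneg _) (Finset.mem_univ l)
  rw [Complex.norm_def]
  exact Real.sqrt_le_one.mpr h6

/-- For a `k × k` Jordan block `J_λ`, the Hermitian positive semidefinite
matrices `G_n = ((J_λ^n)ᴴ J_λ^n)^{1/(2n)}` converge to `|λ| · I_k` as `n → ∞`. -/
theorem jordanBlock_symmetrized_rescaled_tendsto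
    (lam : ℂ) (k : ℕ) (hk : 1 ≤ k) :
    Tendsto
      (fun n : ℕ =>
        psdPow ((jordanBlock lam k ^ n)ᴴ * jordanBlock lam k ^ n)
          (Matrix.isHermitian_conjTranspose_mul_self _) (1 / (2 * (n : ℝ))))
      atTop (nhds (((‖lam‖ : ℝ) : ℂ) • (1 : Matrix (Fin k) (Fin k) ℂ))) := by
  obtain ⟨B, hB0, hBle⟩ := jordan_key lam k hk
  refine tendsto_pi_nhds.mpr ?_
  intro i
  rw [tendsto_pi_nhds]
  intro j
  rw [← tendsto_sub_nhds_zero_iff]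
  apply squeeze_zero_norm' (a := fun n => (k : ℝ) * B n)
  · filter_upwards [eventually_ge_atTop 1] with n hn
    set hP := Matrix.isHermitian_conjTranspose_mul_self (jordanBlock lam k ^ n) with hPdef
    set U : Matrix (Fin k) (Fin k) ℂ := (hP.eigenvectorUnitary : Matrix (Fin k) (Fin k) ℂ)
      with hUdef
    have hUU : U * star U = 1 := Matrix.mem_unitaryGroup_iff.mp hP.eigenvectorUnitary.2
    set t : ℝ := 1 / (2 * (n : ℝ)) with htdef
    set d : Fin k → ℂ := fun l => ((hP.eigenvalues l ^ t : ℝ) : ℂ) with hddef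
    set C : ℂ := ((‖lam‖ : ℝ) : ℂ) with hCdef
    have hG : psdPow ((jordanBlock lam k ^ n)ᴴ * jordanBlock lam k ^ n) hP t i j
        = ∑ l, U i l * d l * star (U j l) := by
      rw [psdPow, Matrix.mul_apply]
      refine Finset.sum_congr rfl fun l _ => ?_
      rw [Matrix.mul_diagonal, Matrix.star_apply]
    have hT : (C • (1 : Matrix (Fin k) (Fin k) ℂ)) i j = ∑ l, U i l * C * star (U j l) := by
      rw [Matrix.smul_apply, ← hUU, Matrix.mul_apply, Finset.smul_sum]
      refine Finset.sum_congr rfl fun l _ => ?_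
      rw [Matrix.star_apply, smul_eq_mul]
      ring
    rw [hG, hT, ← Finset.sum_sub_distrib]
    have hterm : ∀ l, U i l * d l * star (U j l) - U i l * C * star (U j l)
        = U i l * (d l - C) * star (U j l) := fun l => by ring
    simp only [hterm]
    calc ‖∑ l, U i l * (d l - C) * star (U j l)‖
        ≤ ∑ l, ‖U i l * (d l - C) * star (U j l)‖ := norm_sum_le _ _
      _ ≤ ∑ _l : Fin k, B n := by
          refine Finset.sum_le_sum fun l _ => ?_
          rw [norm_mul, norm_mul]
          have h1 : ‖U i l‖ ≤ 1 := unitary_entry_norm_le_one U hUU i l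
          have h2 : ‖star (U j l)‖ ≤ 1 := by
            rw [norm_star]
            exact unitary_entry_norm_le_one U hUU j l
          have h3 : ‖d l - C‖ ≤ B n := by
            rw [hddef, hCdef, ← Complex.ofReal_sub, Complex.norm_real, Real.norm_eq_abs]
            exact hBle n hn l
          calc ‖U i l‖ * ‖d l - C‖ * ‖star (U j l)‖
              ≤ 1 * B n * 1 := by
                have hB0' : 0 ≤ B n := le_trans (norm_nonneg _) h3
                gcongr
            _ = B n := by ring
      _ = (k : ℝ) * B n := by
          rw [Finset.sum_const, Finset.card_univ, Fintype.card_fin, nsmul_eq_mul]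
  · have := hB0.const_mul (k : ℝ)
    simpa using this
end
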